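/- The samples of the PBL signal are uniquely identifiable up to an integer constant vector from the modulo samples if and only if there does not exist a polynomial f with integer coefficients of degree at most N−1, with f not of the form A·(X^{N−1} + X^{N−2} + ⋯ + X + 1) for any A ∈ ℤ, such that f(exp(2πi·n/N)) = 0 for all n with P+1 ≤ n ≤ N−P−1. -/

import Mathlib

open Polynomial

/-- `y : Fin N → ℝ` is a length-`N` sample vector of a periodic bandlimited signal with
`P` harmonics: `y n = ∑_{p=-P}^{P} c p · exp(2πi·n·p/N)` with `c (-p) = conj (c p)`. -/
def IsPBLSample (P N : ℕ) (y : Fin N → ℝ) : Prop :=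
  ∃ c : ℤ → ℂ, (∀ p : ℤ, c (-p) = (starRingEnd ℂ) (c p)) ∧
    ∀ n : Fin N, (y n : ℂ) =
      ∑ p ∈ Finset.Icc (-(P : ℤ)) (P : ℤ),
        c p * Complex.exp (2 * Real.pi * Complex.I * (n : ℕ) * p / N)

/-- The samples of the PBL signal are uniquely identifiable up to an integer constant
vector from the modulo samples: any two PBL sample vectors differing by an integer
vector differ by a constant integer vector. -/
def PBLIdentifiable (P N : ℕ) : Prop :=
  ∀ y y' : Fin N → ℝ, IsPBLSample P N y → IsPBLSample P N y' →
    (∀ n : Fin N, ∃ k : ℤ, y n - y' n = k) →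
    ∃ c : ℤ, ∀ n : Fin N, y n - y' n = c

section Helpers
open Finset

noncomputable def E (N : ℕ) (k : ℤ) : ℂ := Complex.exp (2 * Real.pi * Complex.I * k / N)

lemma E_add (N : ℕ) (j k : ℤ) : E N (j + k) = E N j * E N k := by
  rw [E, E, E, ← Complex.exp_add]; congr 1; push_cast; ring

lemma E_zero (N : ℕ) : E N 0 = 1 := by simp [E]

lemma E_pow (N : ℕ) (k : ℤ) (m : ℕ) : E N k ^ m = E N (k * m) := by
  rw [E, E, ← Complex.exp_nat_mul]; congr 1; push_cast; ring

lemma two_pi_I_ne : (2 : ℂ) * Real.pi * Complex.I ≠ 0 := by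
  have hπ : (Real.pi : ℂ) ≠ 0 := by exact_mod_cast Real.pi_ne_zero
  simp [Complex.I_ne_zero, hπ]

lemma E_eq_one_iff {N : ℕ} (hN : 0 < N) (k : ℤ) : E N k = 1 ↔ (N : ℤ) ∣ k := by
  have hNc : (N : ℂ) ≠ 0 := Nat.cast_ne_zero.2 hN.ne'
  rw [E, Complex.exp_eq_one_iff]
  constructor
  · rintro ⟨m, hm⟩
    refine ⟨m, ?_⟩
    field_simp at hm
    have : (k : ℂ) = (N : ℂ) * m := by
      apply mul_left_cancel₀ two_pi_I_ne
      rw [hm]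
    exact_mod_cast this
  · rintro ⟨m, rfl⟩
    refine ⟨m, ?_⟩
    field_simp
    simp

lemma E_conj (N : ℕ) (k : ℤ) : (starRingEnd ℂ) (E N k) = E N (-k) := by
  rw [E, E, ← Complex.exp_conj]
  congr 1
  simp only [map_div₀, map_mul, Complex.conj_I, Complex.conj_ofReal, map_ofNat,
    map_intCast, map_natCast]
  push_cast
  ring

lemma E_periodic (N : ℕ) (hN : 0 < N) (k : ℤ) : E N (k + N) = E N k := by
  rw [E_add, (E_eq_one_iff hN N).2 ⟨1, by ring⟩, mul_one]

lemma E_orth {N : ℕ} (hN : 0 < N) {m : ℤ} (hm : ¬ (N : ℤ) ∣ m) :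
    ∑ p ∈ range N, E N (m * p) = 0 := by
  have h1 : E N m ≠ 1 := fun h => hm ((E_eq_one_iff hN m).1 h)
  have : ∑ p ∈ range N, E N m ^ p = (E N m ^ N - 1) / (E N m - 1) := geom_sum_eq h1 N
  simp only [E_pow] at this
  rw [this, (E_eq_one_iff hN (m * N)).2 ⟨m, by ring⟩]
  simp

lemma exp_eq_E (N : ℕ) (n : ℕ) (p : ℤ) :
    Complex.exp (2 * Real.pi * Complex.I * n * p / N) = E N (n * p) := by
  rw [E]; congr 1; push_cast; ring

lemma not_dvd_of_abs_lt {N : ℕ} {x : ℤ} (h0 : x ≠ 0) (h : |x| < N) : ¬ (N : ℤ) ∣ x :=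
  fun hd => absurd (Int.le_of_dvd (abs_pos.2 h0) ((dvd_abs _ _).2 hd)) (not_le.2 h)

lemma not_dvd_of_between {N : ℕ} {x : ℤ} (h1 : 0 < x) (h2 : x < N) : ¬ (N : ℤ) ∣ x := by
  intro hd
  have := Int.le_of_dvd h1 hd
  omega

lemma coeff_geom (N : ℕ) (A : ℤ) (m : ℕ) :
    (C A * ∑ i ∈ range N, X ^ i).coeff m = if m < N then A else 0 := by
  rw [coeff_C_mul, finset_sum_coeff]
  simp only [coeff_X_pow]
  rw [Finset.sum_ite_eq (range N) m (fun _ => (1:ℤ))]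
  simp [Finset.mem_range]

lemma aeval_int_conj (f : Polynomial ℤ) (x : ℂ) :
    (starRingEnd ℂ) (Polynomial.aeval x f) = Polynomial.aeval ((starRingEnd ℂ) x) f := by
  rw [Polynomial.aeval_eq_sum_range, Polynomial.aeval_eq_sum_range, map_sum]
  exact Finset.sum_congr rfl fun i _ => by
    simp [zsmul_eq_mul, map_mul, map_pow]

lemma sum_PBL_orth {P N : ℕ} (hN : 2 * P + 1 < N) {y : Fin N → ℝ}
    (h : IsPBLSample P N y) {m : ℤ} (hm1 : (P : ℤ) + 1 ≤ m) (hm2 : m ≤ (N : ℤ) - P - 1) :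
    ∑ n : Fin N, (y n : ℂ) * E N (m * n) = 0 := by
  have hN0 : 0 < N := by omega
  obtain ⟨c, _, hy⟩ := h
  calc ∑ n : Fin N, (y n : ℂ) * E N (m * n)
      = ∑ n : Fin N, ∑ p ∈ Finset.Icc (-(P:ℤ)) P, c p * E N ((p + m) * n) := by
        refine Finset.sum_congr rfl fun n _ => ?_
        rw [hy n, Finset.sum_mul]
        refine Finset.sum_congr rfl fun p _ => ?_
        rw [exp_eq_E, mul_assoc, ← E_add]
        congr 1
        ring
    _ = ∑ p ∈ Finset.Icc (-(P:ℤ)) P, c p * ∑ n : Fin N, E N ((p + m) * n) := by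
        rw [Finset.sum_comm]
        simp [Finset.mul_sum]
    _ = 0 := by
        refine Finset.sum_eq_zero fun p hp => ?_
        rw [Finset.mem_Icc] at hp
        have : ∑ n : Fin N, E N ((p + m) * n) = 0 := by
          rw [Fin.sum_univ_eq_sum_range fun n => E N ((p + m) * n)]
          exact E_orth hN0 (not_dvd_of_between (by omega) (by omega))
        rw [this, mul_zero]

lemma sum_Ico_int (N : ℕ) (g : ℤ → ℂ) :
    ∑ p ∈ Finset.Ico (0 : ℤ) (N : ℤ), g p = ∑ p ∈ range N, g (p : ℤ) := by
  have : Finset.Ico (0 : ℤ) (N : ℤ) =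
      (range N).map ⟨(Nat.cast : ℕ → ℤ), Nat.cast_injective⟩ := by
    ext x
    simp only [Finset.mem_Ico, Finset.mem_map, Finset.mem_range, Function.Embedding.coeFn_mk]
    constructor
    · rintro ⟨h0, hx⟩
      exact ⟨x.toNat, by omega, by omega⟩
    · rintro ⟨n, hn, rfl⟩
      exact ⟨by positivity, by exact_mod_cast hn⟩
  rw [this, Finset.sum_map]
  rfl

lemma inverse_dft {P N : ℕ} (hN : 2 * P + 1 < N) (f : Polynomial ℤ) (hdeg : f.natDegree < N)
    (hvan : ∀ m : ℤ, (P : ℤ) + 1 ≤ m → m ≤ (N : ℤ) - P - 1 → Polynomial.aeval (E N m) f = 0)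
    (n : ℕ) (hn : n < N) :
    ∑ p ∈ Finset.Icc (-(P : ℤ)) (P : ℤ),
      ((N : ℂ)⁻¹ * Polynomial.aeval (E N (-p)) f) * E N ((n : ℤ) * p) = (f.coeff n : ℂ) := by
  have hN0 : 0 < N := by omega
  have hNc : (N : ℂ) ≠ 0 := Nat.cast_ne_zero.2 hN0.ne'
  set g : ℤ → ℂ := fun p => ((N : ℂ)⁻¹ * Polynomial.aeval (E N (-p)) f) * E N ((n : ℤ) * p)
    with hg
  have hper : ∀ p : ℤ, g (p + N) = g p := by
    intro p
    have e1 : E N (-(p + N)) = E N (-p) := by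
      have := E_periodic N hN0 (-(p + N))
      rw [show -(p + (N:ℤ)) + N = -p by ring] at this
      exact this.symm
    have e2 : E N ((n : ℤ) * (p + N)) = E N ((n : ℤ) * p) := by
      rw [show (n : ℤ) * (p + N) = (n : ℤ) * p + n * N by ring, E_add,
        (E_eq_one_iff hN0 ((n:ℤ)*N)).2 ⟨n, by ring⟩, mul_one]
    simp only [hg]
    rw [e1, e2]
  have hmid : ∀ p ∈ Finset.Ico ((P : ℤ) + 1) ((N : ℤ) - P), g p = 0 := by
    intro p hp
    rw [Finset.mem_Ico] at hp
    have hE : E N (-p) = E N ((N : ℤ) - p) := by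
      rw [← E_periodic N hN0 (-p)]; congr 1; ring
    have : Polynomial.aeval (E N (-p)) f = 0 := by
      rw [hE]; exact hvan _ (by omega) (by omega)
    simp [hg, this]
  have hshift : ∑ p ∈ Finset.Ico (-(P : ℤ)) 0, g p
      = ∑ p ∈ Finset.Ico ((N : ℤ) - P) (N : ℤ), g p := by
    have : Finset.Ico ((N : ℤ) - P) (N : ℤ)
        = (Finset.Ico (-(P : ℤ)) 0).map (addRightEmbedding (N : ℤ)) := by
      rw [Finset.map_add_right_Ico]
      congr 1 <;> ring
    rw [this, Finset.sum_map]
    exact Finset.sum_congr rfl fun p _ => (hper p).symm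
  have hsplit : ∑ p ∈ Finset.Icc (-(P : ℤ)) (P : ℤ), g p = ∑ p ∈ Finset.Ico (0 : ℤ) (N : ℤ), g p := by
    have e1 : Finset.Icc (-(P : ℤ)) (P : ℤ) = Finset.Ico (-(P : ℤ)) ((P : ℤ) + 1) := by
      ext x; simp only [Finset.mem_Icc, Finset.mem_Ico]; omega
    have u1 : Finset.Ico (-(P:ℤ)) 0 ∪ Finset.Ico (0:ℤ) ((P:ℤ)+1) = Finset.Ico (-(P:ℤ)) ((P:ℤ)+1) :=
      Finset.Ico_union_Ico_eq_Ico (by omega) (by omega)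
    have u2 : Finset.Ico (0:ℤ) ((P:ℤ)+1) ∪ Finset.Ico ((P:ℤ)+1) ((N:ℤ)-P) = Finset.Ico (0:ℤ) ((N:ℤ)-P) :=
      Finset.Ico_union_Ico_eq_Ico (by omega) (by omega)
    have u3 : Finset.Ico (0:ℤ) ((N:ℤ)-P) ∪ Finset.Ico ((N:ℤ)-P) (N:ℤ) = Finset.Ico (0:ℤ) (N:ℤ) :=
      Finset.Ico_union_Ico_eq_Ico (by omega) (by omega)
    rw [e1, ← u1, Finset.sum_union (Finset.Ico_disjoint_Ico_consecutive _ _ _), hshift,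
      ← u3, Finset.sum_union (Finset.Ico_disjoint_Ico_consecutive _ _ _),
      ← u2, Finset.sum_union (Finset.Ico_disjoint_Ico_consecutive _ _ _),
      Finset.sum_eq_zero hmid]
    ring
  rw [hsplit, sum_Ico_int]
  have expand : ∀ p : ℕ, g (p : ℤ) =
      ∑ m ∈ range N, (N : ℂ)⁻¹ * ((f.coeff m : ℂ) * E N (((n : ℤ) - m) * p)) := by
    intro p
    simp only [hg]
    rw [Polynomial.aeval_eq_sum_range' hdeg, Finset.mul_sum, Finset.sum_mul]
    refine Finset.sum_congr rfl fun m _ => ?_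
    rw [zsmul_eq_mul, E_pow, mul_assoc, mul_assoc, ← E_add,
      show -(p:ℤ) * m + (n:ℤ) * p = ((n : ℤ) - m) * p by ring, ← mul_assoc,
      mul_assoc ((N:ℂ)⁻¹)]
  calc ∑ p ∈ range N, g (p : ℤ)
      = ∑ m ∈ range N, (N : ℂ)⁻¹ * (f.coeff m : ℂ) * ∑ p ∈ range N, E N (((n : ℤ) - m) * p) := by
        simp only [expand]
        rw [Finset.sum_comm]
        simp [Finset.mul_sum, mul_assoc]
    _ = (f.coeff n : ℂ) := by
        rw [Finset.sum_eq_single_of_mem n (Finset.mem_range.2 hn)]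
        · rw [sub_self]
          simp only [zero_mul, E_zero, Finset.sum_const, Finset.card_range, nsmul_eq_mul, mul_one]
          field_simp
        · intro m hm hmn
          rw [Finset.mem_range] at hm
          rw [E_orth hN0 (not_dvd_of_abs_lt (by omega) (by rw [abs_lt]; omega)), mul_zero]

end Helpers

/-- the PBL samples are identifiable up to an integer constant vector iff
there is no integer polynomial f of degree at most N−1, not of the form
A·(X^{N−1} + ⋯ + X + 1), vanishing at e^{2πin/N} for all n with P+1 ≤ n ≤ N−P−1. -/
theorem stmt18 (P N : ℕ) (hP : 1 ≤ P) (hN : 2 * P + 1 < N) :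
    PBLIdentifiable P N ↔
      ¬∃ f : Polynomial ℤ, f.natDegree ≤ N - 1 ∧
        (¬∃ A : ℤ, f = C A * ∑ i ∈ Finset.range N, X ^ i) ∧
        (∀ n : ℕ, P + 1 ≤ n → n ≤ N - P - 1 →
          Polynomial.aeval (Complex.exp (2 * Real.pi * Complex.I * n / N)) f = 0) := by
  have hN0 : 0 < N := by omega
  constructor
  · -- identifiable → no such polynomial
    intro hid
    rintro ⟨f, hdeg, hform, hvan⟩
    apply hform
    have hdeg' : f.natDegree < N := by omega
    have hvan' : ∀ m : ℤ, (P : ℤ) + 1 ≤ m → m ≤ (N : ℤ) - P - 1 →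
        Polynomial.aeval (E N m) f = 0 := by
      intro m h1 h2
      have hm0 : (0 : ℤ) ≤ m := by omega
      have h := hvan m.toNat (by omega) (by omega)
      have he : Complex.exp (2 * Real.pi * Complex.I * (m.toNat : ℕ) / N) = E N m := by
        rw [E]
        congr 2
        have : ((m.toNat : ℕ) : ℂ) = (m : ℂ) := by
          exact_mod_cast congrArg (Int.cast : ℤ → ℂ) (Int.toNat_of_nonneg hm0)
        rw [this]
      rwa [he] at h
    set y : Fin N → ℝ := fun n => (f.coeff n : ℝ) with hy_def
    set c : ℤ → ℂ := fun p => (N : ℂ)⁻¹ * Polynomial.aeval (E N (-p)) f with hc_def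
    have hy : IsPBLSample P N y := by
      refine ⟨c, fun p => ?_, fun n => ?_⟩
      · simp only [hc_def]
        rw [map_mul, aeval_int_conj, E_conj, neg_neg, map_inv₀, map_natCast]
      · have := inverse_dft hN f hdeg' hvan' n n.isLt
        calc (y n : ℂ) = (f.coeff n : ℂ) := by simp [hy_def]
          _ = ∑ p ∈ Finset.Icc (-(P : ℤ)) (P : ℤ),
                c p * Complex.exp (2 * Real.pi * Complex.I * (n : ℕ) * p / N) := by
              rw [← this]
              exact Finset.sum_congr rfl fun p _ => by rw [exp_eq_E]
    have hy' : IsPBLSample P N (fun _ => 0) := ⟨0, by simp, fun n => by simp⟩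
    have hint : ∀ n : Fin N, ∃ k : ℤ, y n - (fun _ => (0:ℝ)) n = k :=
      fun n => ⟨f.coeff n, by simp [hy_def]⟩
    obtain ⟨A, hA⟩ := hid y (fun _ => 0) hy hy' hint
    refine ⟨A, ?_⟩
    apply Polynomial.ext
    intro m
    rw [coeff_geom]
    split
    · next hm =>
        have := hA ⟨m, hm⟩
        simp only [hy_def, sub_zero] at this
        exact_mod_cast this
    · next hm =>
        exact Polynomial.coeff_eq_zero_of_natDegree_lt (by omega)
  · -- no such polynomial → identifiable
    intro hnf y y' hy hy' hint
    choose k hk using hint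
    set K : ℕ → ℤ := fun m => if h : m < N then k ⟨m, h⟩ else 0 with hK_def
    set f : Polynomial ℤ := ∑ m ∈ Finset.range N, C (K m) * X ^ m with hf_def
    have hcoeff : ∀ j : ℕ, f.coeff j = if j < N then K j else 0 := by
      intro j
      rw [hf_def, finset_sum_coeff]
      simp only [coeff_C_mul, coeff_X_pow]
      rw [Finset.sum_congr rfl fun m _ => by rw [mul_ite, mul_one, mul_zero]]
      rw [Finset.sum_ite_eq (Finset.range N) j K]
      simp [Finset.mem_range]
    have hdeg' : f.natDegree < N := by
      by_cases hf0 : f = 0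
      · rw [hf0]; simpa using hN0
      · by_contra hcon
        have h1 : f.coeff f.natDegree ≠ 0 := by
          have := Polynomial.leadingCoeff_ne_zero.mpr hf0
          rwa [Polynomial.leadingCoeff] at this
        rw [hcoeff, if_neg (by omega : ¬ f.natDegree < N)] at h1
        exact h1 rfl
    have hvanish : ∀ n : ℕ, P + 1 ≤ n → n ≤ N - P - 1 →
        Polynomial.aeval (Complex.exp (2 * Real.pi * Complex.I * n / N)) f = 0 := by
      intro n hn1 hn2
      have he : Complex.exp (2 * Real.pi * Complex.I * n / N) = E N n := by
        rw [E]; push_cast; ring_nf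
      rw [he, hf_def, map_sum]
      have : ∀ m ∈ Finset.range N, Polynomial.aeval (E N n) (C (K m) * X ^ m)
          = (K m : ℂ) * E N ((n : ℤ) * m) := by
        intro m _
        rw [map_mul, Polynomial.aeval_C, map_pow, Polynomial.aeval_X, E_pow]
        simp
      rw [Finset.sum_congr rfl this,
        ← Fin.sum_univ_eq_sum_range (fun m => (K m : ℂ) * E N ((n : ℤ) * m)) N]
      have herw : ∀ m : Fin N, (K (m : ℕ) : ℂ) * E N ((n : ℤ) * m)
          = (y m : ℂ) * E N ((n : ℤ) * m) - (y' m : ℂ) * E N ((n : ℤ) * m) := by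
        intro m
        rw [← sub_mul]
        congr 1
        have hKm : K (m : ℕ) = k m := by simp [hK_def, m.isLt, Fin.eta]
        rw [hKm]
        have h3 : ((y m - y' m : ℝ) : ℂ) = ((k m : ℤ) : ℂ) := by
          rw [hk m]; push_cast; ring
        rw [← h3]
        push_cast
        ring
      rw [Finset.sum_congr rfl fun m _ => herw m, Finset.sum_sub_distrib,
        sum_PBL_orth hN hy (by omega) (by omega),
        sum_PBL_orth hN hy' (by omega) (by omega), sub_zero]
    have hA : ∃ A : ℤ, f = C A * ∑ i ∈ Finset.range N, X ^ i := by
      by_contra hA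
      exact hnf ⟨f, by omega, hA, hvanish⟩
    obtain ⟨A, hfA⟩ := hA
    refine ⟨A, fun n => ?_⟩
    have h1 : f.coeff n = A := by
      rw [hfA, coeff_geom]; simp [n.isLt]
    have h2 : f.coeff n = k n := by
      rw [hcoeff]; simp [hK_def, n.isLt, Fin.eta]
    rw [hk n, ← h2, h1]
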